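/- Let I be a Borel-fixed ideal in R = k[x_1,...,x_n] with d = dim R/I, and let s ≥ d. Then the s-reduction number of R/I equals the reduction number with respect to the ideal generated by the last s variables: r_s(R/I) = r_{(x_{n-s+1},...,x_n)}(R/I). -/

import Mathlib

open MvPolynomial

noncomputable section

/-- The total degree of a monomial exponent vector. -/
def monDeg {n : ℕ} (A : Fin n →₀ ℕ) : ℕ := A.sum fun _ e => e

/-- `BorelSpec A B` : the monomial `x^B` is a Borel specialization of `x^A`,
i.e. `x^B` is obtained from `x^A` by replacing every variable `x_i` of `x^A`
by a variable `x_{f i}` with `f i ≤ i`. -/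
def BorelSpec {n : ℕ} (A B : Fin n →₀ ℕ) : Prop :=
  ∃ f : Fin n → Fin n, (∀ i, f i ≤ i) ∧ B = A.mapDomain f

/-- `borelPSet A` : the set of (exponent vectors of) monomials that can be
Borel-specialized to `x^A`. -/
def borelPSet {n : ℕ} (A : Fin n →₀ ℕ) : Set (Fin n →₀ ℕ) := {C | BorelSpec C A}

/-- A monomial ideal: an ideal generated by monomials. -/
def IsMonomialIdeal {k : Type*} [Field k] {n : ℕ} (I : Ideal (MvPolynomial (Fin n) k)) : Prop :=
  ∃ S : Set (Fin n →₀ ℕ), I = Ideal.span ((fun A => (monomial A (1 : k))) '' S)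

/-- Borel-fixed: `I` is fixed by every invertible linear substitution sending each
variable `x_i` to a linear combination of the variables `x_j` with `j ≤ i`
(the Borel group of upper triangular invertible matrices). -/
def IsBorelFixed {k : Type*} [Field k] {n : ℕ} (I : Ideal (MvPolynomial (Fin n) k)) : Prop :=
  ∀ g : Matrix (Fin n) (Fin n) k, IsUnit g.det → (∀ i j : Fin n, i < j → g i j = 0) →
    I.map (aeval (fun i => ∑ j, MvPolynomial.C (g i j) * X j) :
      MvPolynomial (Fin n) k →ₐ[k] MvPolynomial (Fin n) k) = I

/-- The Hilbert function `t ↦ dim_k (R/I)_t`. -/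
def hilb {k : Type*} [Field k] {n : ℕ} (I : Ideal (MvPolynomial (Fin n) k)) (t : ℕ) : ℕ :=
  Module.finrank k
    ((homogeneousSubmodule (Fin n) k t).map (Ideal.Quotient.mkₐ k I).toLinearMap)

/-- `Q` generates a reduction of `R/I` : `(Q + I)_t = R_t` for all large `t`. -/
def IsReductionOf {k : Type*} [Field k] {n : ℕ} (Q I : Ideal (MvPolynomial (Fin n) k)) : Prop :=
  ∃ N : ℕ, ∀ t ≥ N, ∀ p : MvPolynomial (Fin n) k, p.IsHomogeneous t → p ∈ Q ⊔ I

/-- The reduction number `r_Q(R/I)` : the least `r` such that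
`(Q + I)_t = R_t` for all `t > r`. -/
def redNum {k : Type*} [Field k] {n : ℕ} (Q I : Ideal (MvPolynomial (Fin n) k)) : ℕ :=
  sInf {r : ℕ | ∀ t > r, ∀ p : MvPolynomial (Fin n) k, p.IsHomogeneous t → p ∈ Q ⊔ I}

/-- `Q` is an `s`-reduction of `R/I` : it is generated by `s` linear forms and is a
reduction of `R/I`. -/
def IsSReduction {k : Type*} [Field k] {n : ℕ} (s : ℕ)
    (Q I : Ideal (MvPolynomial (Fin n) k)) : Prop :=
  (∃ z : Fin s → MvPolynomial (Fin n) k,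
      (∀ i, (z i).IsHomogeneous 1) ∧ Q = Ideal.span (Set.range z)) ∧
  IsReductionOf Q I

/-- The `s`-reduction number `r_s(R/I)` : the minimum of `r_Q(R/I)` over all
`s`-reductions `Q` of `R/I`. -/
def sRedNum {k : Type*} [Field k] {n : ℕ} (s : ℕ) (I : Ideal (MvPolynomial (Fin n) k)) : ℕ :=
  sInf {r : ℕ | ∃ Q, IsSReduction s Q I ∧ redNum Q I = r}

/-- Strong stability condition on a monomial ideal: if `x^A ∈ I` is divisible by `x_i`,
then `x^A x_j / x_i ∈ I` for all `j ≤ i`. -/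
def StronglyStable {k : Type*} [Field k] {n : ℕ} (I : Ideal (MvPolynomial (Fin n) k)) : Prop :=
  ∀ (A : Fin n →₀ ℕ) (i j : Fin n), monomial A (1 : k) ∈ I → A i ≠ 0 → j ≤ i →
    monomial (A - Finsupp.single i 1 + Finsupp.single j 1) (1 : k) ∈ I

/-- Lex-segment condition: if `x^A ∈ I` and `x^B ≥ x^A` in the lexicographic order
(with `x_1 > x_2 > ⋯ > x_n`) and `deg x^B = deg x^A`, then `x^B ∈ I`. -/
def IsLexSegment {k : Type*} [Field k] {n : ℕ} (I : Ideal (MvPolynomial (Fin n) k)) : Prop :=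
  ∀ A B : Fin n →₀ ℕ, monomial A (1 : k) ∈ I → monDeg B = monDeg A →
    Finsupp.Lex (· < ·) (· < ·) A B → monomial B (1 : k) ∈ I

/-- A homogeneous ideal: closed under taking homogeneous components. -/
def IsHomogeneousIdeal {k : Type*} [Field k] {n : ℕ} (I : Ideal (MvPolynomial (Fin n) k)) : Prop :=
  ∀ p ∈ I, ∀ t : ℕ, homogeneousComponent t p ∈ I

/-- The ideal generated by the last `s` variables `x_{n-s+1}, …, x_n`. -/
def lastVars (k : Type*) [Field k] (n s : ℕ) : Ideal (MvPolynomial (Fin n) k) :=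
  Ideal.span ((fun i => (X i : MvPolynomial (Fin n) k)) '' {i : Fin n | n - s ≤ (i : ℕ)})





namespace Stmt11Aux

open Finsupp in
/-- substitution attached to a matrix -/
def phi {k : Type*} [Field k] {n : ℕ} (M : Matrix (Fin n) (Fin n) k) :
    MvPolynomial (Fin n) k →ₐ[k] MvPolynomial (Fin n) k :=
  aeval (fun i => ∑ j, MvPolynomial.C (M i j) * X j)

variable {k : Type*} [Field k] {n : ℕ}

lemma phi_X (M : Matrix (Fin n) (Fin n) k) (i : Fin n) :
    phi M (X i) = ∑ j, MvPolynomial.C (M i j) * X j := aeval_X _ i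

lemma phi_C (M : Matrix (Fin n) (Fin n) k) (a : k) : phi M (C a) = C a := by
  simp [phi, algebraMap_eq]

lemma phi_phi (M N : Matrix (Fin n) (Fin n) k) (p : MvPolynomial (Fin n) k) :
    phi M (phi N p) = phi (N * M) p := by
  have h : (phi M).comp (phi N) = phi (N * M) := by
    apply MvPolynomial.algHom_ext
    intro i
    simp only [AlgHom.comp_apply, phi_X, map_sum, map_mul, phi_C]
    simp only [Finset.mul_sum]
    rw [Finset.sum_comm]
    apply Finset.sum_congr rfl
    intro l _
    rw [Matrix.mul_apply, map_sum, Finset.sum_mul]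
    apply Finset.sum_congr rfl
    intro j _
    rw [map_mul, mul_assoc]
  calc phi M (phi N p) = ((phi M).comp (phi N)) p := rfl
  _ = phi (N * M) p := by rw [h]

lemma phi_one (p : MvPolynomial (Fin n) k) : phi (1 : Matrix (Fin n) (Fin n) k) p = p := by
  have h : phi (1 : Matrix (Fin n) (Fin n) k) = AlgHom.id k _ := by
    apply MvPolynomial.algHom_ext
    intro i
    rw [phi_X]
    rw [Finset.sum_eq_single i]
    · simp [Matrix.one_apply]
    · intro j _ hj; simp [Matrix.one_apply, (Ne.symm hj)]
    · simp
  rw [h]; rfl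

lemma phi_homog (M : Matrix (Fin n) (Fin n) k) {p : MvPolynomial (Fin n) k} {t : ℕ}
    (hp : p.IsHomogeneous t) : (phi M p).IsHomogeneous t := by
  have := hp.aeval (fun i => ∑ j, MvPolynomial.C (M i j) * X j)
    (fun i => MvPolynomial.IsHomogeneous.sum _ _ _
      (fun j _ => MvPolynomial.isHomogeneous_C_mul_X _ _))
  rw [one_mul] at this; exact this




variable {k : Type*} [Field k] {n : ℕ}

lemma mem_monIdeal_iff (S : Set (Fin n →₀ ℕ)) (p : MvPolynomial (Fin n) k) :
    p ∈ Ideal.span ((fun A => (monomial A (1:k))) '' S) ↔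
      ∀ A, p.coeff A ≠ 0 → ∃ B ∈ S, ∀ i, B i ≤ A i := by
  classical
  constructor
  · intro hp
    refine Submodule.span_induction ?_ ?_ ?_ ?_ hp
    · rintro x ⟨B, hB, rfl⟩ A hA
      rw [coeff_monomial] at hA
      by_cases h : B = A
      · exact ⟨B, hB, fun i => by rw [h]⟩
      · simp [h] at hA
    · intro A hA; simp at hA
    · intro x y _ _ hx hy A hA
      rw [coeff_add] at hA
      rcases (by by_contra hc; push_neg at hc; rw [hc.1, hc.2, add_zero] at hA; exact hA rfl :
          x.coeff A ≠ 0 ∨ y.coeff A ≠ 0) with h | h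
      · exact hx A h
      · exact hy A h
    · intro r x _ hx A hA
      rw [smul_eq_mul, coeff_mul] at hA
      obtain ⟨uv, huv, hne⟩ := Finset.exists_ne_zero_of_sum_ne_zero hA
      have hx2 : x.coeff uv.2 ≠ 0 := fun h0 => hne (by rw [h0, mul_zero])
      obtain ⟨B, hB, hle⟩ := hx uv.2 hx2
      refine ⟨B, hB, fun i => ?_⟩
      have : uv.1 + uv.2 = A := Finset.HasAntidiagonal.mem_antidiagonal.mp huv
      calc B i ≤ uv.2 i := hle i
      _ ≤ uv.1 i + uv.2 i := Nat.le_add_left _ _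
      _ = A i := by rw [← Finsupp.add_apply, this]
  · intro h
    rw [← support_sum_monomial_coeff p]
    apply Ideal.sum_mem
    intro A hA
    obtain ⟨B, hB, hle⟩ := h A (mem_support_iff.mp hA)
    have hAB : A - B + B = A := by
      ext i
      simp only [Finsupp.add_apply, Finsupp.tsub_apply]
      exact Nat.sub_add_cancel (hle i)
    have heq : monomial A (coeff A p) = monomial (A - B) (coeff A p) * monomial B 1 := by
      rw [monomial_mul, mul_one, hAB]
    rw [heq]
    exact Ideal.mul_mem_left _ _ (Ideal.subset_span ⟨B, hB, rfl⟩)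

lemma monomial_mem_of_coeff {I : Ideal (MvPolynomial (Fin n) k)} (hmon : IsMonomialIdeal I)
    {q : MvPolynomial (Fin n) k} (hq : q ∈ I) {A : Fin n →₀ ℕ} (hA : q.coeff A ≠ 0) :
    monomial A (1 : k) ∈ I := by
  obtain ⟨S, rfl⟩ := hmon
  obtain ⟨B, hB, hle⟩ := (mem_monIdeal_iff S q).mp hq A hA
  refine (mem_monIdeal_iff S _).mpr ?_
  intro A' hA'
  rw [coeff_monomial] at hA'
  by_cases h : A = A'
  · exact ⟨B, hB, h ▸ hle⟩
  · simp [h] at hA'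

/-- transfer a degree-`t` covering hypothesis along a Borel substitution -/
lemma transfer {I : Ideal (MvPolynomial (Fin n) k)} (hborel : IsBorelFixed I)
    (M : Matrix (Fin n) (Fin n) k) (hdet : IsUnit M.det)
    (hlow : ∀ i j : Fin n, i < j → M i j = 0) {t : ℕ} {s : ℕ}
    (z : Fin s → MvPolynomial (Fin n) k)
    (H : ∀ p : MvPolynomial (Fin n) k, p.IsHomogeneous t → p ∈ Ideal.span (Set.range z) ⊔ I) :
    ∀ p : MvPolynomial (Fin n) k, p.IsHomogeneous t →
      p ∈ Ideal.span (Set.range (fun i => phi M (z i))) ⊔ I := by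
  intro p hp
  have hq : (phi M⁻¹ p).IsHomogeneous t := phi_homog _ hp
  have hmem := H _ hq
  have hpq : phi M (phi M⁻¹ p) = p := by
    rw [phi_phi, Matrix.nonsing_inv_mul _ hdet, phi_one]
  have h2 : p ∈ Ideal.map (phi M) (Ideal.span (Set.range z) ⊔ I) := by
    rw [← hpq]; exact Ideal.mem_map_of_mem _ hmem
  rw [Ideal.map_sup, Ideal.map_span] at h2
  have hI : Ideal.map (phi M) I = I := hborel M hdet hlow
  rw [hI] at h2
  rw [← Set.range_comp] at h2
  exact h2

lemma degree_add (f g : Fin n →₀ ℕ) :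
    Finsupp.degree (f + g) = Finsupp.degree f + Finsupp.degree g := by
  rw [Finsupp.degree_eq_weight_one, map_add]

lemma degree_single (i : Fin n) (a : ℕ) : Finsupp.degree (Finsupp.single i a) = a := by
  classical
  rcases eq_or_ne a 0 with h | h
  · simp [h, Finsupp.degree]
  · rw [Finsupp.degree_apply, Finsupp.support_single_ne_zero _ h]
    simp

lemma eq_single_of_degree_one {d : Fin n →₀ ℕ} (hd : Finsupp.degree d = 1) :
    ∃ j, d = Finsupp.single j 1 := by
  classical
  have hne : d ≠ 0 := by
    intro h; rw [h] at hd; simp [Finsupp.degree] at hd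
  obtain ⟨j, hj⟩ : ∃ j, d j ≠ 0 := by
    by_contra hc; push_neg at hc; exact hne (Finsupp.ext fun i => hc i)
  have hj1 : d j = 1 := le_antisymm (hd ▸ Finsupp.le_degree j d) (Nat.one_le_iff_ne_zero.mpr hj)
  refine ⟨j, Finsupp.ext fun i => ?_⟩
  rcases eq_or_ne i j with rfl | hij
  · simp [hj1]
  · rw [Finsupp.single_apply, if_neg (Ne.symm hij)]
    by_contra hi
    have hsub : ({i, j} : Finset (Fin n)) ⊆ d.support := by
      intro x hx
      rcases Finset.mem_insert.mp hx with rfl | hx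
      · exact Finsupp.mem_support_iff.mpr hi
      · rw [Finset.mem_singleton.mp hx]; exact Finsupp.mem_support_iff.mpr hj
    have h2 : 2 ≤ Finsupp.degree d := by
      calc 2 ≤ d i + d j := by
              have : 1 ≤ d i := Nat.one_le_iff_ne_zero.mpr hi
              omega
      _ = ∑ x ∈ ({i, j} : Finset (Fin n)), d x := (Finset.sum_pair hij).symm
      _ ≤ ∑ x ∈ d.support, d x := Finset.sum_le_sum_of_subset hsub
      _ = Finsupp.degree d := rfl
    omega

lemma monomial_mul_mul_C (D E F : Fin n →₀ ℕ) (x : k) :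
    monomial D (1:k) * (monomial E (1:k) * monomial F (1:k) * C x) =
      monomial (D + E + F) x := by
  rw [mul_comm (monomial E (1:k) * monomial F (1:k)) (C x), monomial_mul, mul_one,
    C_mul_monomial, mul_one, monomial_mul, one_mul, add_assoc]

lemma full_move {I : Ideal (MvPolynomial (Fin n) k)} (hmon : IsMonomialIdeal I)
    (hborel : IsBorelFixed I) {D : Fin n →₀ ℕ} {src tgt : Fin n} (hlt : tgt < src)
    (hD : D src = 0) (a : ℕ)
    (hmem : monomial (D + Finsupp.single src a) (1:k) ∈ I) :
    monomial (D + Finsupp.single tgt a) (1:k) ∈ I := by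
  classical
  have hne : tgt ≠ src := ne_of_lt hlt
  set M : Matrix (Fin n) (Fin n) k := 1 + Matrix.single src tgt 1 with hM
  have hlow : ∀ i j : Fin n, i < j → M i j = 0 := by
    intro i j hij
    have h1 : ¬ (src = i ∧ tgt = j) := by
      rintro ⟨rfl, rfl⟩; exact absurd hij (not_lt.mpr hlt.le)
    simp [hM, Matrix.one_apply, Matrix.single, hij.ne, h1]
  have hbt : M.BlockTriangular OrderDual.toDual := by
    intro i j h
    exact hlow i j (by simpa using h)
  have hdet : IsUnit M.det := by
    rw [Matrix.det_of_lowerTriangular M hbt]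
    have : ∀ i : Fin n, M i i = 1 := by
      intro i
      have h1 : ¬ (src = i ∧ tgt = i) := by rintro ⟨rfl, rfl⟩; exact hne rfl
      simp [hM, Matrix.one_apply, Matrix.single, h1]
    rw [Finset.prod_congr rfl (fun i _ => this i), Finset.prod_const_one]
    exact isUnit_one
  have hXsrc : phi M (X src) = X tgt + X src := by
    rw [phi_X]
    have hb : ∀ j : Fin n, (C (M src j) * X j : MvPolynomial (Fin n) k) =
        (if j = tgt then X j else 0) + (if j = src then X j else 0) := by
      intro j
      rcases eq_or_ne j src with rfl | h1
      · simp [hM, Matrix.one_apply, Matrix.single, Matrix.of_apply, hne, Ne.symm hne]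
      · rcases eq_or_ne j tgt with rfl | h2
        · simp [hM, Matrix.one_apply, Matrix.single, Matrix.of_apply, h1, Ne.symm h1]
        · have h3 : ¬ (src = j ∧ tgt = j) := by rintro ⟨rfl, rfl⟩; exact hne rfl
          simp [hM, Matrix.one_apply, Matrix.single, Matrix.of_apply, h1, Ne.symm h1,
            h2, Ne.symm h2, h3]
    rw [Finset.sum_congr rfl (fun j _ => hb j), Finset.sum_add_distrib,
      Finset.sum_ite_eq' Finset.univ tgt (fun j => (X j : MvPolynomial (Fin n) k)),
      Finset.sum_ite_eq' Finset.univ src (fun j => (X j : MvPolynomial (Fin n) k))]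
    simp
  have hXother : ∀ i : Fin n, i ≠ src → phi M (X i) = X i := by
    intro i hi
    rw [phi_X]
    have hb : ∀ j : Fin n, (C (M i j) * X j : MvPolynomial (Fin n) k) =
        (if j = i then X j else 0) := by
      intro j
      rcases eq_or_ne j i with rfl | h1
      · have h2 : ¬ (src = j ∧ tgt = j) := by rintro ⟨rfl, _⟩; exact hi rfl
        simp [hM, Matrix.one_apply, Matrix.single, Matrix.of_apply, h2]
      · have h3 : ¬ (src = j ∧ tgt = j) := by
          rintro ⟨rfl, rfl⟩; exact hne rfl
        have h4 : ¬ (src = i ∧ tgt = j) := by rintro ⟨rfl, rfl⟩; exact hi rfl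
        simp [hM, Matrix.one_apply, Matrix.single, Matrix.of_apply, h1, Ne.symm h1, h4]
    rw [Finset.sum_congr rfl (fun j _ => hb j),
      Finset.sum_ite_eq' Finset.univ i (fun j => (X j : MvPolynomial (Fin n) k))]
    simp
  have hmonC : phi M (monomial D (1 : k)) = monomial D (1 : k) := by
    rw [monomial_eq, Finsupp.prod]
    rw [map_mul, phi_C, map_prod]
    congr 1
    apply Finset.prod_congr rfl
    intro i hi
    have : i ≠ src := by
      intro h; rw [h] at hi; exact (Finsupp.mem_support_iff.mp hi) hD
    rw [map_pow, hXother i this]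
  -- q ∈ I
  have hq : monomial D (1:k) * (X tgt + X src) ^ a ∈ I := by
    have h0 : monomial (D + Finsupp.single src a) (1:k) =
        monomial D (1:k) * (X src) ^ a := by
      rw [X_pow_eq_monomial, monomial_mul, mul_one]
    have h1 : phi M (monomial (D + Finsupp.single src a) (1:k)) ∈ Ideal.map (phi M) I :=
      Ideal.mem_map_of_mem _ hmem
    have h2 : Ideal.map (phi M) I = I := hborel M hdet hlow
    rw [h2] at h1
    rw [h0, map_mul, map_pow, hmonC, hXsrc] at h1
    exact h1
  -- coefficient extraction
  have hcoeff : (monomial D (1:k) * (X tgt + X src) ^ a).coeff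
      (D + Finsupp.single tgt a) = 1 := by
    rw [add_pow]
    rw [Finset.mul_sum]
    have hterm : ∀ c : ℕ, monomial D (1:k) * ((X tgt) ^ c * (X src) ^ (a - c) * (a.choose c : MvPolynomial (Fin n) k)) =
        monomial (D + Finsupp.single tgt c + Finsupp.single src (a - c)) ((a.choose c : k)) := by
      intro c
      rw [X_pow_eq_monomial, X_pow_eq_monomial,
        show ((a.choose c : MvPolynomial (Fin n) k)) = C ((a.choose c : k)) from
          (map_natCast (C : k →+* MvPolynomial (Fin n) k) (a.choose c)).symm,
        monomial_mul_mul_C]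
    rw [coeff_sum]
    rw [Finset.sum_congr rfl (fun c _ => congrArg (coeff _) (hterm c))]
    rw [Finset.sum_eq_single_of_mem a (Finset.self_mem_range_succ a)]
    · rw [Nat.sub_self, Finsupp.single_zero, add_zero, coeff_monomial, if_pos rfl,
        Nat.choose_self, Nat.cast_one]
    · intro c hc hca
      rw [coeff_monomial, if_neg]
      intro hEq
      have := DFunLike.congr_fun hEq src
      simp only [Finsupp.add_apply, Finsupp.single_eq_same,
        Finsupp.single_eq_of_ne' hne] at this
      have hclt : c < a := lt_of_le_of_ne (Nat.lt_succ_iff.mp (Finset.mem_range.mp hc)) hca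
      omega
  have h1ne : (1 : k) ≠ 0 := one_ne_zero
  exact monomial_mem_of_coeff hmon hq (by rw [hcoeff]; exact h1ne)

lemma gauss (s : ℕ) (v : Fin s → (Fin n → k)) :
    ∃ M : Matrix (Fin n) (Fin n) k, IsUnit M.det ∧ (∀ i j : Fin n, i < j → M i j = 0) ∧
      ∃ T : Finset (Fin n), T.card ≤ s ∧
        ∀ i j, j ∉ T → Matrix.vecMul (v i) M j = 0 := by
  classical
  induction s with
  | zero =>
    exact ⟨1, by simp, fun i j h => Matrix.one_apply_ne (ne_of_lt h), ∅, le_refl 0,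
      fun i => i.elim0⟩
  | succ s IH =>
    obtain ⟨M₁, hdet₁, hlow₁, T₁, hT₁, hv₁⟩ := IH (fun i => v i.succ)
    set w := Matrix.vecMul (v 0) M₁ with hw
    by_cases hcase : ∀ j, j ∉ T₁ → w j = 0
    · exact ⟨M₁, hdet₁, hlow₁, T₁, le_trans hT₁ (Nat.le_succ s),
        fun i => Fin.cases (fun j hj => hcase j hj) (fun i' j hj => hv₁ i' j hj) i⟩
    · push_neg at hcase
      obtain ⟨j₁, hj₁T, hj₁w⟩ := hcase
      set G : Finset (Fin n) := Finset.univ.filter (fun j => j ∉ T₁ ∧ w j ≠ 0) with hG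
      have hGne : G.Nonempty := ⟨j₁, by simp [hG, hj₁T, hj₁w]⟩
      set j₀ := G.max' hGne with hj₀
      have hj₀G : j₀ ∈ G := G.max'_mem hGne
      have hj₀T : j₀ ∉ T₁ := by
        have := Finset.mem_filter.mp hj₀G; exact this.2.1
      have hj₀w : w j₀ ≠ 0 := by
        have := Finset.mem_filter.mp hj₀G; exact this.2.2
      have hmax : ∀ j, j₀ < j → j ∉ T₁ → w j = 0 := by
        intro j hj hjT
        by_contra hwj
        have hjG : j ∈ G := by simp [hG, hjT, hwj]
        exact absurd (G.le_max' j hjG) (not_le.mpr hj)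
      set r : Fin n → k := fun l => if l = j₀ then 0 else if l ∈ T₁ then 0
        else -(w l / w j₀) with hr
      set M₂ : Matrix (Fin n) (Fin n) k :=
        1 + Matrix.of (fun i l => (if i = j₀ then 1 else 0) * r l) with hM₂
      have hM₂app : ∀ i l, M₂ i l =
          (1 : Matrix (Fin n) (Fin n) k) i l + (if i = j₀ then 1 else 0) * r l :=
        fun i l => rfl
      have hrj₀ : r j₀ = 0 := by rw [hr]; simp
      have hlow₂ : ∀ i j : Fin n, i < j → M₂ i j = 0 := by
        intro i j hij
        rw [hM₂app, Matrix.one_apply_ne (ne_of_lt hij)]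
        rcases eq_or_ne i j₀ with rfl | hi
        · rw [if_pos rfl, one_mul]
          simp only [hr]
          rw [if_neg (ne_of_lt hij).symm]
          by_cases hjT : j ∈ T₁
          · rw [if_pos hjT]; ring
          · rw [if_neg hjT, hmax j hij hjT]
            simp
        · rw [if_neg hi]; ring
      have hdiag₂ : ∀ i, M₂ i i = 1 := by
        intro i
        rw [hM₂app, Matrix.one_apply_eq]
        rcases eq_or_ne i j₀ with rfl | hi
        · rw [if_pos rfl, hrj₀]; ring
        · rw [if_neg hi]; ring
      have hbt₂ : M₂.BlockTriangular ⇑OrderDual.toDual := by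
        intro i j h
        exact hlow₂ i j (by simpa using h)
      have hdet₂ : IsUnit M₂.det := by
        rw [Matrix.det_of_lowerTriangular M₂ hbt₂,
          Finset.prod_congr rfl (fun i _ => hdiag₂ i), Finset.prod_const_one]
        exact isUnit_one
      have hkey : ∀ u : Fin n → k, ∀ jj, Matrix.vecMul u M₂ jj = u jj + u j₀ * r jj := by
        intro u jj
        rw [hM₂, Matrix.vecMul_add, Matrix.vecMul_one]
        have hE : Matrix.vecMul u (Matrix.of fun i l => (if i = j₀ then 1 else 0) * r l) jj
            = ∑ l, u l * ((if l = j₀ then 1 else 0) * r jj) := rfl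
        have : ∑ l, u l * ((if l = j₀ then 1 else 0) * r jj) = u j₀ * r jj := by
          rw [Finset.sum_eq_single j₀]
          · rw [if_pos rfl, one_mul]
          · intro b _ hb; rw [if_neg hb]; ring
          · intro h; exact absurd (Finset.mem_univ j₀) h
        simp only [Pi.add_apply, hE, this]
      refine ⟨M₁ * M₂, ?_, ?_, insert j₀ T₁, ?_, ?_⟩
      · rw [Matrix.det_mul]; exact hdet₁.mul hdet₂
      · have hbt₁ : M₁.BlockTriangular ⇑OrderDual.toDual := by
          intro i j h; exact hlow₁ i j (by simpa using h)
        intro i j hij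
        exact (hbt₁.mul hbt₂) (by simpa using hij)
      · calc (insert j₀ T₁).card ≤ T₁.card + 1 := Finset.card_insert_le _ _
        _ ≤ s + 1 := by omega
      · intro i j hj
        have hjj₀ : j ≠ j₀ := fun h => hj (h ▸ Finset.mem_insert_self _ _)
        have hjT₁ : j ∉ T₁ := fun h => hj (Finset.mem_insert_of_mem h)
        rw [← Matrix.vecMul_vecMul]
        refine Fin.cases ?_ ?_ i
        · rw [← hw, hkey]
          simp only [hr, if_neg hjj₀, if_neg hjT₁]
          rw [mul_neg, mul_comm (w j₀), div_mul_cancel₀ _ hj₀w]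
          ring
        · intro i'
          rw [hkey, hv₁ i' j hjT₁, hv₁ i' j₀ hj₀T]
          ring

variable {s' : ℕ}

def lin (v : Fin n → k) : MvPolynomial (Fin n) k := ∑ j, C (v j) * X j

lemma phi_lin (M : Matrix (Fin n) (Fin n) k) (v : Fin n → k) :
    phi M (lin v) = lin (Matrix.vecMul v M) := by
  rw [lin, map_sum, lin]
  simp only [map_mul, phi_C, phi_X, Finset.mul_sum]
  rw [Finset.sum_comm]
  apply Finset.sum_congr rfl
  intro l _
  have hv : Matrix.vecMul v M l = ∑ j, v j * M j l := rfl
  rw [hv, map_sum, Finset.sum_mul]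
  apply Finset.sum_congr rfl
  intro j _
  rw [map_mul, mul_assoc]

lemma eq_lin_of_homog1 {p : MvPolynomial (Fin n) k} (hp : p.IsHomogeneous 1) :
    p = lin (fun j => p.coeff (Finsupp.single j 1)) := by
  classical
  apply MvPolynomial.ext
  intro d
  rw [lin, coeff_sum]
  simp only [coeff_C_mul, coeff_X']
  by_cases hd : ∃ j, d = Finsupp.single j 1
  · obtain ⟨j, rfl⟩ := hd
    rw [Finset.sum_eq_single j]
    · rw [if_pos rfl, mul_one]
    · intro b _ hb
      rw [if_neg, mul_zero]
      intro hEq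
      exact hb (Finsupp.single_left_injective one_ne_zero hEq)
    · intro h; exact absurd (Finset.mem_univ j) h
  · have hL : p.coeff d = 0 := by
      by_contra hc
      have hdeg : (Finsupp.weight 1) d = 1 := hp hc
      have : Finsupp.degree d = 1 := by
        rw [Finsupp.degree_eq_weight_one]; exact hdeg
      exact hd (eq_single_of_degree_one this)
    rw [hL]
    symm
    apply Finset.sum_eq_zero
    intro j _
    rw [if_neg, mul_zero]
    intro hEq
    exact hd ⟨j, hEq.symm⟩

lemma card_high (hsn : s' ≤ n) :
    (Finset.univ.filter (fun l : Fin n => n - s' ≤ (l : ℕ))).card = s' := by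
  classical
  have : Finset.univ.filter (fun l : Fin n => n - s' ≤ (l : ℕ)) =
      Finset.map ⟨fun i : Fin s' => (⟨n - s' + (i : ℕ), by omega⟩ : Fin n),
        by intro a b hab; apply Fin.ext; have := Fin.mk.inj_iff.mp hab; omega⟩
        Finset.univ := by
    ext l
    simp only [Finset.mem_filter, Finset.mem_univ, true_and, Finset.mem_map,
      Function.Embedding.coeFn_mk]
    constructor
    · intro hl
      refine ⟨⟨(l : ℕ) - (n - s'), by omega⟩, by apply Fin.ext; change n - s' + ((l : ℕ) - (n - s')) = (l : ℕ); omega⟩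
    · rintro ⟨i, rfl⟩
      show n - s' ≤ n - s' + (i : ℕ); omega
  rw [this, Finset.card_map, Finset.card_univ, Fintype.card_fin]

lemma degree_filter_not_mem (A : Fin n →₀ ℕ) (s : Finset (Fin n)) (hs : s ⊆ A.support) :
    Finsupp.degree A =
      Finsupp.degree (A.filter (fun i => i ∉ s)) + ∑ i ∈ s, A i := by
  have h1 : (A.filter (fun i => i ∉ s)).support = A.support.filter (fun i => i ∉ s) :=
    Finsupp.support_filter _ _
  rw [Finsupp.degree_apply, Finsupp.degree_apply, h1]
  have h2 : ∀ i ∈ A.support.filter (fun i => i ∉ s),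
      (A.filter (fun i => i ∉ s)) i = A i := by
    intro i hi
    rw [Finsupp.filter_apply, if_pos (Finset.mem_filter.mp hi).2]
  rw [Finset.sum_congr rfl h2]
  have h3 : ∑ i ∈ s, A i = ∑ i ∈ A.support.filter (fun i => ¬ i ∉ s), A i := by
    apply Finset.sum_congr _ (fun _ _ => rfl)
    ext i
    simp only [Finset.mem_filter, not_not]
    constructor
    · intro hi; exact ⟨hs hi, hi⟩
    · intro hi; exact hi.2
  rw [h3, Finset.sum_filter_add_sum_filter_not]

lemma degree_sum_single (F : Finset (Fin n)) (g : Fin n → Fin n) (A : Fin n →₀ ℕ) :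
    Finsupp.degree (∑ i ∈ F, Finsupp.single (g i) (A i)) = ∑ i ∈ F, A i := by
  have hw : ∀ d : Fin n →₀ ℕ, (Finsupp.weight (fun _ => 1)) d = Finsupp.degree d := by
    intro d; rw [Finsupp.degree_eq_weight_one]
  rw [Finsupp.degree_eq_weight_one, map_sum]
  apply Finset.sum_congr rfl
  intro i _
  rw [hw, degree_single]

lemma monomial_single_one_eq_X (j : Fin n) :
    monomial (Finsupp.single j 1) (1:k) = X j := by
  rw [← X_pow_eq_monomial, pow_one]

lemma keyLemma {I : Ideal (MvPolynomial (Fin n) k)} (hmon : IsMonomialIdeal I)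
    (hborel : IsBorelFixed I) {s : ℕ} (hsn : s ≤ n) (z : Fin s → MvPolynomial (Fin n) k)
    (hz : ∀ i, (z i).IsHomogeneous 1) (t : ℕ)
    (H : ∀ p : MvPolynomial (Fin n) k, p.IsHomogeneous t →
      p ∈ Ideal.span (Set.range z) ⊔ I) :
    ∀ p : MvPolynomial (Fin n) k, p.IsHomogeneous t → p ∈ lastVars k n s ⊔ I := by
  classical
  obtain ⟨S, hS⟩ := hmon
  obtain ⟨M, hdet, hlow, T, hT, hvec⟩ :=
    gauss s (fun i j => (z i).coeff (Finsupp.single j 1))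
  have H' := transfer hborel M hdet hlow z H
  have star : ∀ B : Fin n →₀ ℕ, Finsupp.degree B = t → (∀ j ∈ T, B j = 0) →
      monomial B (1:k) ∈ I := by
    intro B hBdeg hBT
    have hmem : monomial B (1:k) ∈
        Ideal.span (Set.range (fun i => phi M (z i))) ⊔ I :=
      H' _ (isHomogeneous_monomial _ hBdeg)
    have hQT : Ideal.span (Set.range (fun i => phi M (z i))) ≤
        Ideal.span ((fun A => monomial A (1:k)) ''
          ((fun j : Fin n => Finsupp.single j 1) '' ↑T)) := by
      rw [Ideal.span_le]
      rintro w hw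
      rw [SetLike.mem_coe]
      obtain ⟨i, rfl⟩ := hw
      show phi M (z i) ∈ _
      have hzi : phi M (z i) =
          lin (Matrix.vecMul (fun j => (z i).coeff (Finsupp.single j 1)) M) := by
        conv_lhs => rw [eq_lin_of_homog1 (hz i)]
        exact phi_lin _ _
      rw [hzi, lin]
      apply Ideal.sum_mem
      intro j _
      by_cases hj : j ∈ T
      · apply Ideal.mul_mem_left
        apply Ideal.subset_span
        exact ⟨Finsupp.single j 1, ⟨j, hj, rfl⟩, monomial_single_one_eq_X j⟩
      · rw [hvec i j hj]
        simp
    have hmem2 : monomial B (1:k) ∈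
        Ideal.span ((fun A => monomial A (1:k)) ''
          (((fun j : Fin n => Finsupp.single j 1) '' ↑T) ∪ S)) := by
      rw [Set.image_union, Ideal.span_union]
      exact (sup_le_sup hQT hS.le) hmem
    obtain ⟨B', hB', hle⟩ := (mem_monIdeal_iff _ _).mp hmem2 B
      (by rw [coeff_monomial, if_pos rfl]; exact one_ne_zero)
    rcases hB' with ⟨j, hjT, rfl⟩ | hB'S
    · exfalso
      have h1 := hle j
      rw [Finsupp.single_eq_same, hBT j hjT] at h1
      omega
    · rw [hS]
      refine (mem_monIdeal_iff S _).mpr ?_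
      intro A' hA'
      rw [coeff_monomial] at hA'
      by_cases hBA : B = A'
      · exact ⟨B', hB'S, hBA ▸ hle⟩
      · exact absurd (if_neg hBA) hA'
  -- main conclusion
  intro p hp
  rw [← support_sum_monomial_coeff p]
  apply Ideal.sum_mem
  intro A hA
  have hdegA : Finsupp.degree A = t := by
    rw [Finsupp.degree_eq_weight_one]
    exact hp (mem_support_iff.mp hA)
  by_cases hhigh : ∃ i : Fin n, A i ≠ 0 ∧ n - s ≤ (i : ℕ)
  · obtain ⟨i, hAi, hiHigh⟩ := hhigh
    apply Ideal.mem_sup_left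
    have hXi : (X i : MvPolynomial (Fin n) k) ∈ lastVars k n s :=
      Ideal.subset_span ⟨i, hiHigh, rfl⟩
    have hAi1 : A - Finsupp.single i 1 + Finsupp.single i 1 = A := by
      ext l
      simp only [Finsupp.add_apply, Finsupp.tsub_apply, Finsupp.single_apply]
      rcases eq_or_ne i l with rfl | hil
      · rw [if_pos rfl]
        have h1A : 1 ≤ A i := Nat.one_le_iff_ne_zero.mpr hAi
        omega
      · rw [if_neg hil]; omega
    have hsplit : monomial A (coeff A p) =
        monomial (A - Finsupp.single i 1) (coeff A p) * X i := by
      rw [← monomial_single_one_eq_X, monomial_mul, mul_one, hAi1]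
    rw [hsplit]
    exact Ideal.mul_mem_left _ _ hXi
  · push_neg at hhigh
    apply Ideal.mem_sup_right
    set D : Finset (Fin n) := A.support ∩ T with hD
    set High : Finset (Fin n) := Finset.univ.filter (fun l : Fin n => n - s ≤ (l : ℕ))
      with hHigh
    set E : Finset (Fin n) := High \ T with hE
    have hDsupp : D ⊆ A.support := Finset.inter_subset_left
    have hlowA : ∀ i ∈ A.support, (i : ℕ) < n - s := by
      intro i hi
      exact hhigh i (Finsupp.mem_support_iff.mp hi)
    have hDcard : D.card ≤ E.card := by
      have h1 : High.card = s := card_high hsn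
      have h2 := Finset.card_inter_add_card_sdiff High T
      have h3 : Disjoint D (High ∩ T) := by
        rw [Finset.disjoint_left]
        intro x hxD hx2
        have hx3 : (x : ℕ) < n - s := hlowA x (hDsupp hxD)
        have hx4 : n - s ≤ (x : ℕ) := by
          have := Finset.mem_filter.mp (Finset.mem_of_mem_inter_left hx2)
          exact this.2
        omega
      have h4 : D ∪ (High ∩ T) ⊆ T :=
        Finset.union_subset Finset.inter_subset_right Finset.inter_subset_right
      have h5 := Finset.card_union_of_disjoint h3
      have h6 : (D ∪ (High ∩ T)).card ≤ T.card := Finset.card_le_card h4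
      rw [← hE] at h2
      omega
    obtain ⟨E', hE'sub, hE'card⟩ := Finset.exists_subset_card_eq hDcard
    have e : (D : Finset (Fin n)) ≃ (E' : Finset (Fin n)) :=
      Finset.equivOfCardEq hE'card.symm
    set σ : Fin n → Fin n := fun i => if h : i ∈ D then ((e ⟨i, h⟩ : E') : Fin n) else i
      with hσ
    have hσE : ∀ i (h : i ∈ D), σ i ∈ E := by
      intro i h
      rw [hσ]; simp only [dif_pos h]
      exact hE'sub (e ⟨i, h⟩).2
    have hσT : ∀ i, i ∈ D → σ i ∉ T := by
      intro i h
      exact (Finset.mem_sdiff.mp (hσE i h)).2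
    have hσhigh : ∀ i, i ∈ D → n - s ≤ (σ i : ℕ) := by
      intro i h
      have := (Finset.mem_sdiff.mp (hσE i h)).1
      exact (Finset.mem_filter.mp this).2
    have hσsupp : ∀ i, i ∈ D → A (σ i) = 0 := by
      intro i h
      by_contra hc
      have := hlowA (σ i) (Finsupp.mem_support_iff.mpr hc)
      have h2 := hσhigh i h
      omega
    have hσinj : ∀ i₁, i₁ ∈ D → ∀ i₂, i₂ ∈ D → σ i₁ = σ i₂ → i₁ = i₂ := by
      intro i₁ h₁ i₂ h₂ hEq
      rw [hσ] at hEq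
      simp only [dif_pos h₁, dif_pos h₂] at hEq
      have h3 := e.injective (Subtype.coe_injective hEq)
      exact congrArg Subtype.val h3
    have hσgt : ∀ i, i ∈ D → i < σ i := by
      intro i h
      have h1 : (i : ℕ) < n - s := hlowA i (hDsupp h)
      have h2 := hσhigh i h
      rw [Fin.lt_def]
      omega
    set BF : Finset (Fin n) → (Fin n →₀ ℕ) := fun F =>
      A.filter (fun l => l ∉ D \ F) + ∑ l ∈ D \ F, Finsupp.single (σ l) (A l) with hBF
    have hBFD : BF D = A := by
      rw [hBF]
      simp only [Finset.sdiff_self, Finset.sum_empty, add_zero]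
      ext l
      rw [Finsupp.filter_apply, if_pos (Finset.notMem_empty l)]
    have hBdeg : Finsupp.degree (BF ∅) = t := by
      rw [hBF]
      simp only [Finset.sdiff_empty]
      rw [degree_add, degree_sum_single]
      have := degree_filter_not_mem A D hDsupp
      omega
    have hBT : ∀ j ∈ T, BF ∅ j = 0 := by
      intro j hj
      rw [hBF]
      simp only [Finset.sdiff_empty, Finsupp.add_apply]
      have h1 : A.filter (fun l => l ∉ D) j = 0 := by
        rw [Finsupp.filter_apply]
        by_cases hjD : j ∈ D
        · rw [if_neg (by simpa using hjD)]
        · have hjA : A j = 0 := by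
            by_contra hc
            exact hjD (Finset.mem_inter.mpr ⟨Finsupp.mem_support_iff.mpr hc, hj⟩)
          split <;> simp [hjA]
      have h2 : (∑ l ∈ D, Finsupp.single (σ l) (A l)) j = 0 := by
        rw [Finset.sum_apply']
        apply Finset.sum_eq_zero
        intro l hl
        rw [Finsupp.single_apply, if_neg]
        intro hEq
        exact (hσT l hl) (hEq ▸ hj)
      rw [h1, h2]
    have hind : ∀ F : Finset (Fin n), F ⊆ D → monomial (BF F) (1:k) ∈ I := by
      intro F
      induction F using Finset.induction_on with
      | empty => intro _; exact star _ hBdeg hBT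
      | @insert i F hiF ih =>
        intro hsub
        have hiD : i ∈ D := hsub (Finset.mem_insert_self i F)
        have hFD : F ⊆ D := fun x hx => hsub (Finset.mem_insert_of_mem hx)
        have hiDF : i ∈ D \ F := Finset.mem_sdiff.mpr ⟨hiD, hiF⟩
        set Cc : Fin n →₀ ℕ := A.filter (fun l => l ∉ D \ F) +
          ∑ l ∈ D \ insert i F, Finsupp.single (σ l) (A l) with hCc
        have herase : (D \ F).erase i = D \ insert i F := by
          ext x
          simp only [Finset.mem_erase, Finset.mem_sdiff, Finset.mem_insert]
          tauto
        have hclaim1 : BF F = Cc + Finsupp.single (σ i) (A i) := by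
          rw [hBF, hCc, add_assoc]
          congr 1
          rw [← herase, Finset.sum_erase_add _ _ hiDF]
        have hclaim2 : Cc (σ i) = 0 := by
          rw [hCc, Finsupp.add_apply]
          have h1 : A.filter (fun l => l ∉ D \ F) (σ i) = 0 := by
            rw [Finsupp.filter_apply]
            split
            · exact hσsupp i hiD
            · rfl
          have h2 : (∑ l ∈ D \ insert i F, Finsupp.single (σ l) (A l)) (σ i) = 0 := by
            rw [Finset.sum_apply']
            apply Finset.sum_eq_zero
            intro l hl
            rw [Finsupp.single_apply, if_neg]
            intro hEq
            have hlD : l ∈ D := (Finset.mem_sdiff.mp hl).1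
            have : l = i := hσinj l hlD i hiD hEq
            exact (Finset.mem_sdiff.mp hl).2 (this ▸ Finset.mem_insert_self i F)
          rw [h1, h2]
        have hclaim3 : BF (insert i F) = Cc + Finsupp.single i (A i) := by
          simp only [hBF, hCc]
          have hfilter : A.filter (fun l => l ∉ D \ insert i F) =
              A.filter (fun l => l ∉ D \ F) + Finsupp.single i (A i) := by
            ext l
            rw [Finsupp.add_apply, Finsupp.filter_apply, Finsupp.filter_apply,
              Finsupp.single_apply]
            rcases eq_or_ne i l with rfl | hil
            · rw [if_pos rfl, if_pos (fun h => (Finset.mem_sdiff.mp h).2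
                (Finset.mem_insert_self i F)), if_neg (by simpa using hiDF)]
              omega
            · rw [if_neg hil, add_zero]
              have : (l ∉ D \ insert i F) ↔ (l ∉ D \ F) := by
                simp only [Finset.mem_sdiff, Finset.mem_insert]
                have : l ≠ i := Ne.symm hil
                tauto
              by_cases hc : l ∉ D \ insert i F
              · rw [if_pos hc, if_pos (this.mp hc)]
              · rw [if_neg hc, if_neg (fun h => hc (this.mpr h))]
          rw [hfilter, add_right_comm]
        have hmemF : monomial (BF F) (1:k) ∈ I := ih hFD
        rw [hclaim1] at hmemF
        have := full_move ⟨S, hS⟩ hborel (hσgt i hiD) hclaim2 (A i) hmemF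
        rw [hclaim3]
        exact this
    have hAmem : monomial A (1:k) ∈ I := hBFD ▸ hind D (le_refl D)
    have : monomial A (coeff A p) = C (coeff A p) * monomial A (1:k) := by
      rw [C_mul_monomial, mul_one]
    rw [this]
    exact Ideal.mul_mem_left _ _ hAmem

lemma lastVars_gens (hsn : s' ≤ n) :
    ∃ z : Fin s' → MvPolynomial (Fin n) k, (∀ i, (z i).IsHomogeneous 1) ∧
      lastVars k n s' = Ideal.span (Set.range z) := by
  refine ⟨fun i => X (⟨n - s' + (i : ℕ), by omega⟩ : Fin n),
    fun i => isHomogeneous_X _ _, ?_⟩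
  rw [lastVars]
  congr 1
  ext q
  simp only [Set.mem_image, Set.mem_range, Set.mem_setOf_eq]
  constructor
  · rintro ⟨i, hi, rfl⟩
    refine ⟨⟨(i : ℕ) - (n - s'), by omega⟩, ?_⟩
    congr 1
    apply Fin.ext
    simp only []
    omega
  · rintro ⟨i, rfl⟩
    exact ⟨⟨n - s' + (i : ℕ), by omega⟩, by simp, rfl⟩

end Stmt11Aux

/-- For a Borel-fixed ideal `I` and `s ≥ d = dim R/I`,
`r_s(R/I) = r_{(x_{n-s+1},…,x_n)}(R/I)`. -/
theorem stmt11 {k : Type*} [Field k] {n : ℕ} (I : Ideal (MvPolynomial (Fin n) k))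
    (hmon : IsMonomialIdeal I) (hborel : IsBorelFixed I)
    (s : ℕ) (hsn : s ≤ n)
    (hdim : ringKrullDim (MvPolynomial (Fin n) k ⧸ I) ≤ (s : ℕ)) :
    sRedNum s I = redNum (lastVars k n s) I := by
  classical
  obtain ⟨zL, hzL, hLspan⟩ := Stmt11Aux.lastVars_gens (k := k) hsn
  have key : ∀ Q : Ideal (MvPolynomial (Fin n) k),
      (∃ z : Fin s → MvPolynomial (Fin n) k, (∀ i, (z i).IsHomogeneous 1) ∧
        Q = Ideal.span (Set.range z)) →
      ∀ (t : ℕ) (p : MvPolynomial (Fin n) k), p.IsHomogeneous t →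
        (∀ q : MvPolynomial (Fin n) k, q.IsHomogeneous t → q ∈ Q ⊔ I) →
        p ∈ lastVars k n s ⊔ I := by
    rintro Q ⟨z, hz, rfl⟩ t p hp hQ
    exact Stmt11Aux.keyLemma hmon hborel hsn z hz t hQ p hp
  by_cases hex : ∃ Q, IsSReduction s Q I
  · obtain ⟨Q₀, hQ₀⟩ := hex
    have hLred : IsReductionOf (lastVars k n s) I := by
      obtain ⟨N, hN⟩ := hQ₀.2
      exact ⟨N, fun t ht p hp => key Q₀ hQ₀.1 t p hp (fun q hq => hN t ht q hq)⟩
    have hLs : IsSReduction s (lastVars k n s) I := ⟨⟨zL, hzL, hLspan⟩, hLred⟩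
    have hmono : ∀ Q, IsSReduction s Q I → redNum (lastVars k n s) I ≤ redNum Q I := by
      intro Q hQ
      have hsub : {r : ℕ | ∀ t > r, ∀ p : MvPolynomial (Fin n) k,
            p.IsHomogeneous t → p ∈ Q ⊔ I} ⊆
          {r : ℕ | ∀ t > r, ∀ p : MvPolynomial (Fin n) k,
            p.IsHomogeneous t → p ∈ lastVars k n s ⊔ I} := by
        intro r hr t ht p hp
        exact key Q hQ.1 t p hp (fun q hq => hr t ht q hq)
      obtain ⟨N, hN⟩ := hQ.2
      have hne : N ∈ {r : ℕ | ∀ t > r, ∀ p : MvPolynomial (Fin n) k,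
          p.IsHomogeneous t → p ∈ Q ⊔ I} :=
        fun t ht p hp => hN t (le_of_lt ht) p hp
      rw [redNum, redNum]
      exact Nat.sInf_le (hsub (Nat.sInf_mem ⟨N, hne⟩))
    apply le_antisymm
    · rw [sRedNum]
      exact Nat.sInf_le ⟨lastVars k n s, hLs, rfl⟩
    · rw [sRedNum]
      refine le_csInf ?_ ?_
      · exact ⟨redNum (lastVars k n s) I, ⟨lastVars k n s, hLs, rfl⟩⟩
      · rintro r ⟨Q, hQ, rfl⟩
        exact hmono Q hQ
  · have h1 : sRedNum s I = 0 := by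
      rw [sRedNum]
      convert Nat.sInf_empty
      rw [Set.eq_empty_iff_forall_notMem]
      rintro r ⟨Q, hQ, _⟩
      exact hex ⟨Q, hQ⟩
    have h2 : redNum (lastVars k n s) I = 0 := by
      rw [redNum]
      convert Nat.sInf_empty
      rw [Set.eq_empty_iff_forall_notMem]
      intro r hr
      exact hex ⟨lastVars k n s, ⟨⟨zL, hzL, hLspan⟩,
        ⟨r + 1, fun t ht p hp => hr t (by omega) p hp⟩⟩⟩
    rw [h1, h2]
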